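/- arXiv:1201.4057 — 2 statements merged into one kernel-verified Lean document; each statement's English description precedes it below -/
import Mathlib

section
/- For every k ∈ ℕ, writing 𝒜 = 𝒜(ℓ~_{N(k)}), one has 𝒜/2 ≤ k ≤ 𝒜/2 + √𝒜. -/
open MeasureTheory Filter

/-- Initial local time: edge `i` denotes the half-integer edge `i + 1/2`
joining `i` and `i+1`; `aInit i = a(i + 1/2)`, which is `0` if `|i+1/2| - 1/2`
is even and `-1` if it is odd. -/
def aInit (i : ℤ) : ℤ := if Even (if 0 ≤ i then i else -i - 1) then 0 else -1

/-- State of the self-repelling walk: current position, edge local times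
(`loc i` is the local time of the edge joining `i` and `i+1`, i.e. of the
half-integer edge `i + 1/2`), and the number of coins used so far. -/
structure SRWState where
  pos : ℤ
  loc : ℤ → ℤ
  coins : ℕ

/-- One step of the self-repelling walk driven by the coin sequence `ε`. -/
def srwStep (ε : ℕ → ℤ) (s : SRWState) : SRWState :=
  let lm := s.loc (s.pos - 1)   -- ℓ_n⁻ = ℓ_n(X_n - 1/2)
  let lp := s.loc s.pos         -- ℓ_n⁺ = ℓ_n(X_n + 1/2)
  let next : ℤ := if lp < lm then s.pos + 1
    else if lm < lp then s.pos - 1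
    else s.pos + ε s.coins
  { pos := next
    loc := fun i => if i = min s.pos next then s.loc i + 1 else s.loc i
    coins := if lm = lp then s.coins + 1 else s.coins }

/-- The self-repelling walk: state after `n` steps. -/
def srw (ε : ℕ → ℤ) : ℕ → SRWState
  | 0 => ⟨0, aInit, 0⟩
  | n + 1 => srwStep ε (srw ε n)

/-- Position `X_n` of the self-repelling walk. -/
def Xwalk (ε : ℕ → ℤ) (n : ℕ) : ℤ := (srw ε n).pos

/-- Edge local time `ℓ_n(i + 1/2)`. -/
def ellEdge (ε : ℕ → ℤ) (n : ℕ) (i : ℤ) : ℤ := (srw ε n).loc i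

/-- `ℓ_n⁻ = ℓ_n(X_n - 1/2)`. -/
def ellMinus (ε : ℕ → ℤ) (n : ℕ) : ℤ := ellEdge ε n (Xwalk ε n - 1)

/-- `ℓ_n⁺ = ℓ_n(X_n + 1/2)`. -/
def ellPlus (ε : ℕ → ℤ) (n : ℕ) : ℤ := ellEdge ε n (Xwalk ε n)

/-- `n` is an equality time: `ℓ_n⁻ = ℓ_n⁺`. -/
def IsEqTime (ε : ℕ → ℤ) (n : ℕ) : Prop := ellMinus ε n = ellPlus ε n

/-- `N(k)`: the `(k+1)`-st smallest equality time. -/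
noncomputable def timeN (ε : ℕ → ℤ) (k : ℕ) : ℕ := Nat.nth (IsEqTime ε) k

/-- `H_n = (ℓ_n⁻ + ℓ_n⁺)/2`. -/
def Hheight (ε : ℕ → ℤ) (n : ℕ) : ℤ := (ellMinus ε n + ellPlus ε n) / 2

/-- `ã(x)`: `0` for even `x`, `-1` for odd `x`. -/
def aTilde (x : ℤ) : ℤ := if Even x then 0 else -1

/-- Modified local time `ℓ~_n(x)`: equals `ℓ_n(x - 1/2)` for `x ≤ X_n` and
`ℓ_n(x + 1/2)` for `x > X_n`. -/
def modLoc (ε : ℕ → ℤ) (n : ℕ) (x : ℤ) : ℤ :=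
  if x ≤ Xwalk ε n then ellEdge ε n (x - 1) else ellEdge ε n x

/-- Area `𝒜(f) = Σ_x (f(x) - ã(x))` between `f` and `ã`. -/
noncomputable def areaA (f : ℤ → ℤ) : ℤ := ∑ᶠ x : ℤ, (f x - aTilde x)

/-- `m₋(f) = 1 + max {x ≤ 0 : f x = -1}`. -/
noncomputable def mMinus (f : ℤ → ℤ) : ℤ := 1 + sSup {x : ℤ | x ≤ 0 ∧ f x = -1}

/-- `m₊(f) = -1 + min {x ≥ 0 : f x = -1}`. -/
noncomputable def mPlus (f : ℤ → ℤ) : ℤ := -1 + sInf {x : ℤ | 0 ≤ x ∧ f x = -1}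

/-- `O(f)`: the number of zeros of `f` strictly between `m₋(f)` and `m₊(f)`. -/
noncomputable def nZeros (f : ℤ → ℤ) : ℕ :=
  {x : ℤ | mMinus f < x ∧ x < mPlus f ∧ f x = 0}.ncard

/-- `o₊ = max {x < m₊(f) : f x = 0}`. -/
noncomputable def oPlus (f : ℤ → ℤ) : ℤ := sSup {x : ℤ | x < mPlus f ∧ f x = 0}

/-- `o₋ = min {x > m₋(f) : f x = 0}`. -/
noncomputable def oMinus (f : ℤ → ℤ) : ℤ := sInf {x : ℤ | mMinus f < x ∧ f x = 0}

open Classical in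
/-- The admissible interval `I(f)`. -/
noncomputable def interI (f : ℤ → ℤ) : Set ℤ :=
  if f = aTilde then {0}
  else if nZeros f = 0 then Set.Icc (mMinus f) (mPlus f)
  else if 0 < oPlus f then Set.Ioc (oPlus f) (mPlus f)
  else Set.Ico (mMinus f) (oMinus f)

/-- Coins as `±1`-valued integers from booleans. -/
def coin (ω : ℕ → Bool) (j : ℕ) : ℤ := if ω j then 1 else -1

/-! ### Auxiliary development -/

section Aux

open Classical

theorem aTilde_nonpos (x : ℤ) : aTilde x ≤ 0 := by
  unfold aTilde; split <;> norm_num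

theorem neg_one_le_aTilde (x : ℤ) : (-1 : ℤ) ≤ aTilde x := by
  unfold aTilde; split <;> norm_num

theorem aTilde_add_one (x : ℤ) : aTilde (x + 1) = -1 - aTilde x := by
  unfold aTilde
  by_cases h : Even x <;> simp [h, Int.even_add_one]

theorem aInit_of_nonneg {x : ℤ} (h : 0 ≤ x) : aInit x = aTilde x := by
  simp only [aInit, aTilde, if_pos h]

theorem aInit_pred {x : ℤ} (h : x ≤ 0) : aInit (x - 1) = aTilde x := by
  have h0 : ¬ (0 ≤ x - 1) := by omega
  have h1 : -(x - 1) - 1 = -x := by ring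
  simp only [aInit, if_neg h0, h1, aTilde, even_neg]

/-- The modified local time as a function of a state. -/
def Fmod (s : SRWState) (x : ℤ) : ℤ := if x ≤ s.pos then s.loc (x - 1) else s.loc x

theorem modLoc_eq_Fmod (ε : ℕ → ℤ) (n : ℕ) : modLoc ε n = Fmod (srw ε n) := rfl

theorem Fmod_pos (s : SRWState) : Fmod s s.pos = s.loc (s.pos - 1) :=
  if_pos le_rfl

theorem Fmod_pos_succ (s : SRWState) : Fmod s (s.pos + 1) = s.loc (s.pos + 1) :=
  if_neg (by omega)

theorem Fmod_pos_pred (s : SRWState) : Fmod s (s.pos - 1) = s.loc (s.pos - 2) := by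
  rw [Fmod, if_pos (by omega)]; ring_nf

/-- The per-state invariant of the walk. -/
structure StInv (s : SRWState) : Prop where
  par : ∀ x, (2:ℤ) ∣ (Fmod s x - aTilde x)
  par2 : (2:ℤ) ∣ (s.loc (s.pos - 1) - s.loc s.pos)
  lip : ∀ x, x ≠ s.pos → |Fmod s (x+1) - Fmod s x| ≤ 1
  hid : |s.loc s.pos - s.loc (s.pos + 1)| ≤ 1
  ge : ∀ x, aTilde x ≤ Fmod s x
  lpge : (-1:ℤ) ≤ s.loc s.pos
  eqnn : s.loc (s.pos - 1) = s.loc s.pos → 0 ≤ s.loc s.pos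
  close : |s.loc (s.pos - 1) - s.loc s.pos| ≤ 2

/-- Right move update. -/
def updR (s : SRWState) (c : ℕ) : SRWState :=
  ⟨s.pos + 1, fun i => if i = s.pos then s.loc i + 1 else s.loc i, c⟩

/-- Left move update. -/
def updL (s : SRWState) (c : ℕ) : SRWState :=
  ⟨s.pos - 1, fun i => if i = s.pos - 1 then s.loc i + 1 else s.loc i, c⟩

theorem Fmod_updR_of_ne (s : SRWState) (c : ℕ) {x : ℤ} (hx : x ≠ s.pos + 1) :
    Fmod (updR s c) x = Fmod s x := by
  rcases le_or_gt x s.pos with h | h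
  · rw [Fmod, if_pos (by simp [updR]; omega), Fmod, if_pos h]
    simp only [updR, if_neg (by omega : ¬ x - 1 = s.pos)]
  · have h2 : s.pos + 1 < x := by
      rcases lt_or_eq_of_le (by omega : s.pos + 1 ≤ x) with h' | h'
      · exact h'
      · exact absurd h'.symm hx
    rw [Fmod, if_neg (by simp [updR]; omega), Fmod, if_neg (by omega)]
    simp only [updR, if_neg (by omega : ¬ x = s.pos)]

theorem Fmod_updR_self (s : SRWState) (c : ℕ) :
    Fmod (updR s c) (s.pos + 1) = s.loc s.pos + 1 := by
  rw [Fmod, if_pos (by simp [updR])]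
  simp [updR]

theorem Fmod_updL_of_ne (s : SRWState) (c : ℕ) {x : ℤ} (hx : x ≠ s.pos) :
    Fmod (updL s c) x = Fmod s x := by
  rcases le_or_gt x (s.pos - 1) with h | h
  · rw [Fmod, if_pos (by simp [updL]; omega), Fmod, if_pos (by omega)]
    simp only [updL, if_neg (by omega : ¬ x - 1 = s.pos - 1)]
  · have h2 : s.pos < x := by omega
    rw [Fmod, if_neg (by simp [updL]; omega), Fmod, if_neg (by omega)]
    simp only [updL, if_neg (by omega : ¬ x = s.pos - 1)]

theorem Fmod_updL_self (s : SRWState) (c : ℕ) :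
    Fmod (updL s c) s.pos = s.loc s.pos := by
  rw [Fmod, if_neg (by simp [updL])]
  simp [updL, if_neg (by omega : ¬ s.pos = s.pos - 1)]

theorem StInv.h02R {s : SRWState} (hs : StInv s) (hle : s.loc s.pos ≤ s.loc (s.pos - 1)) :
    s.loc (s.pos - 1) - s.loc s.pos = 0 ∨ s.loc (s.pos - 1) - s.loc s.pos = 2 := by
  have h1 := hs.par2
  have h2 := abs_le.mp hs.close
  omega

theorem StInv.h02L {s : SRWState} (hs : StInv s) (hle : s.loc (s.pos - 1) ≤ s.loc s.pos) :
    s.loc s.pos - s.loc (s.pos - 1) = 0 ∨ s.loc s.pos - s.loc (s.pos - 1) = 2 := by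
  have h1 := hs.par2
  have h2 := abs_le.mp hs.close
  omega

end Aux
section Aux2

@[simp] theorem updR_pos (s : SRWState) (c : ℕ) : (updR s c).pos = s.pos + 1 := rfl
@[simp] theorem updL_pos (s : SRWState) (c : ℕ) : (updL s c).pos = s.pos - 1 := rfl
@[simp] theorem updR_coins (s : SRWState) (c : ℕ) : (updR s c).coins = c := rfl
@[simp] theorem updL_coins (s : SRWState) (c : ℕ) : (updL s c).coins = c := rfl

theorem updR_loc_pos (s : SRWState) (c : ℕ) : (updR s c).loc s.pos = s.loc s.pos + 1 :=
  if_pos rfl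

theorem updR_loc_of_ne (s : SRWState) (c : ℕ) {i : ℤ} (h : i ≠ s.pos) :
    (updR s c).loc i = s.loc i := if_neg h

theorem updL_loc_pred (s : SRWState) (c : ℕ) :
    (updL s c).loc (s.pos - 1) = s.loc (s.pos - 1) + 1 := if_pos rfl

theorem updL_loc_of_ne (s : SRWState) (c : ℕ) {i : ℤ} (h : i ≠ s.pos - 1) :
    (updL s c).loc i = s.loc i := if_neg h

theorem stinv_updR (s : SRWState) (c : ℕ) (hs : StInv s)
    (hle : s.loc s.pos ≤ s.loc (s.pos - 1)) : StInv (updR s c) := by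
  have h02 := hs.h02R hle
  have hpar_p := hs.par s.pos
  rw [Fmod_pos] at hpar_p
  have hpar_p1 := hs.par (s.pos + 1)
  rw [Fmod_pos_succ] at hpar_p1
  have hat := aTilde_add_one s.pos
  have hpar2 := hs.par2
  have hhid := abs_le.mp hs.hid
  have hlpge := hs.lpge
  constructor
  · -- par
    intro x
    by_cases hx : x = s.pos + 1
    · subst hx
      rw [Fmod_updR_self]
      omega
    · rw [Fmod_updR_of_ne s c hx]; exact hs.par x
  · -- par2
    rw [updR_pos, add_sub_cancel_right, updR_loc_pos,
      updR_loc_of_ne s c (by omega : s.pos + 1 ≠ s.pos)]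
    omega
  · -- lip
    intro x hx
    rw [updR_pos] at hx
    by_cases h1 : x = s.pos
    · subst h1
      rw [Fmod_updR_self, Fmod_updR_of_ne s c (by omega : s.pos ≠ s.pos + 1), Fmod_pos]
      rw [abs_le]; omega
    · rw [Fmod_updR_of_ne s c (by omega : x + 1 ≠ s.pos + 1),
        Fmod_updR_of_ne s c (by omega : x ≠ s.pos + 1)]
      exact hs.lip x h1
  · -- hid
    rw [updR_pos, updR_loc_of_ne s c (by omega : s.pos + 1 ≠ s.pos),
      updR_loc_of_ne s c (by omega : s.pos + 1 + 1 ≠ s.pos)]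
    have := hs.lip (s.pos + 1) (by omega)
    rw [Fmod_pos_succ] at this
    rw [Fmod, if_neg (by omega : ¬ s.pos + 1 + 1 ≤ s.pos)] at this
    rw [abs_le] at this ⊢
    omega
  · -- ge
    intro x
    by_cases hx : x = s.pos + 1
    · subst hx
      rw [Fmod_updR_self]
      have := aTilde_nonpos (s.pos + 1)
      omega
    · rw [Fmod_updR_of_ne s c hx]; exact hs.ge x
  · -- lpge
    rw [updR_pos, updR_loc_of_ne s c (by omega : s.pos + 1 ≠ s.pos)]
    have := hs.ge (s.pos + 1)
    rw [Fmod_pos_succ] at this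
    have := neg_one_le_aTilde (s.pos + 1)
    omega
  · -- eqnn
    rw [updR_pos, add_sub_cancel_right, updR_loc_pos,
      updR_loc_of_ne s c (by omega : s.pos + 1 ≠ s.pos)]
    intro h
    omega
  · -- close
    rw [updR_pos, add_sub_cancel_right, updR_loc_pos,
      updR_loc_of_ne s c (by omega : s.pos + 1 ≠ s.pos)]
    rw [abs_le]; omega

theorem stinv_updL (s : SRWState) (c : ℕ) (hs : StInv s)
    (hle : s.loc (s.pos - 1) ≤ s.loc s.pos) : StInv (updL s c) := by
  have h02 := hs.h02L hle
  have hpar_p := hs.par s.pos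
  rw [Fmod_pos] at hpar_p
  have hpar_pm := hs.par (s.pos - 1)
  rw [Fmod_pos_pred] at hpar_pm
  have hat := aTilde_add_one (s.pos - 1)
  rw [sub_add_cancel] at hat
  have hpar2 := hs.par2
  have hhid := abs_le.mp hs.hid
  have hlpge := hs.lpge
  have hgep := hs.ge s.pos
  rw [Fmod_pos] at hgep
  have hlipm := hs.lip (s.pos - 1) (by omega)
  rw [Fmod_pos_pred, sub_add_cancel, Fmod_pos, abs_le] at hlipm
  constructor
  · -- par
    intro x
    by_cases hx : x = s.pos
    · subst hx
      rw [Fmod_updL_self]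
      omega
    · rw [Fmod_updL_of_ne s c hx]; exact hs.par x
  · -- par2
    rw [updL_pos, updL_loc_pred,
      updL_loc_of_ne s c (by omega : s.pos - 1 - 1 ≠ s.pos - 1),
      show s.pos - 1 - 1 = s.pos - 2 by ring]
    omega
  · -- lip
    intro x hx
    rw [updL_pos] at hx
    by_cases h1 : x = s.pos
    · subst h1
      rw [Fmod_updL_self, Fmod_updL_of_ne s c (by omega : s.pos + 1 ≠ s.pos), Fmod_pos_succ]
      rw [abs_le]; omega
    · rw [Fmod_updL_of_ne s c (by omega : x + 1 ≠ s.pos),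
        Fmod_updL_of_ne s c h1]
      exact hs.lip x (by omega)
  · -- hid
    rw [updL_pos, sub_add_cancel, updL_loc_pred,
      updL_loc_of_ne s c (by omega : s.pos ≠ s.pos - 1)]
    rw [abs_le]; omega
  · -- ge
    intro x
    by_cases hx : x = s.pos
    · subst hx
      rw [Fmod_updL_self]
      omega
    · rw [Fmod_updL_of_ne s c hx]; exact hs.ge x
  · -- lpge
    rw [updL_pos, updL_loc_pred]
    have := neg_one_le_aTilde s.pos
    omega
  · -- eqnn
    rw [updL_pos, updL_loc_pred,
      updL_loc_of_ne s c (by omega : s.pos - 1 - 1 ≠ s.pos - 1),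
      show s.pos - 1 - 1 = s.pos - 2 by ring]
    intro h
    have := neg_one_le_aTilde s.pos
    omega
  · -- close
    rw [updL_pos, updL_loc_pred,
      updL_loc_of_ne s c (by omega : s.pos - 1 - 1 ≠ s.pos - 1),
      show s.pos - 1 - 1 = s.pos - 2 by ring]
    rw [abs_le]; omega

end Aux2
section Aux3

theorem srwStep_R (ε : ℕ → ℤ) (s : SRWState) (h : s.loc s.pos < s.loc (s.pos - 1)) :
    srwStep ε s = updR s s.coins := by
  simp only [srwStep, updR]
  rw [if_pos h, if_neg (by omega), min_eq_left (by omega)]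

theorem srwStep_L (ε : ℕ → ℤ) (s : SRWState) (h : s.loc (s.pos - 1) < s.loc s.pos) :
    srwStep ε s = updL s s.coins := by
  simp only [srwStep, updL]
  rw [if_neg (by omega), if_pos h, if_neg (by omega), min_eq_right (by omega)]

theorem srwStep_ER (ε : ℕ → ℤ) (s : SRWState) (h : s.loc (s.pos - 1) = s.loc s.pos)
    (he : ε s.coins = 1) : srwStep ε s = updR s (s.coins + 1) := by
  simp only [srwStep, updR]
  rw [if_neg (by omega), if_neg (by omega), he, if_pos h, min_eq_left (by omega)]

theorem srwStep_EL (ε : ℕ → ℤ) (s : SRWState) (h : s.loc (s.pos - 1) = s.loc s.pos)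
    (he : ε s.coins = -1) : srwStep ε s = updL s (s.coins + 1) := by
  simp only [srwStep, updL]
  rw [if_neg (by omega), if_neg (by omega), he, if_pos h,
    show s.pos + -1 = s.pos - 1 by ring, min_eq_right (by omega)]

theorem areaA_update {f g : ℤ → ℤ} (x₀ : ℤ)
    (hf : (Function.support fun x => f x - aTilde x).Finite)
    (hfg : ∀ x, x ≠ x₀ → g x = f x) :
    areaA g = areaA f + (g x₀ - f x₀) := by
  have hfg0 : ∀ x, x ≠ x₀ → g x - f x = 0 := fun x hx => by rw [hfg x hx]; ring
  have hdiff : (Function.support fun x => g x - f x) ⊆ {x₀} := by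
    intro x hx
    by_contra hne
    exact hx (hfg0 x (by simpa using hne))
  have h1 : areaA g = ∑ᶠ x, ((f x - aTilde x) + (g x - f x)) :=
    finsum_congr (fun x => by ring)
  rw [h1, finsum_add_distrib hf (Set.Finite.subset (Set.finite_singleton x₀) hdiff),
    finsum_eq_single (fun x => g x - f x) x₀ hfg0]
  rfl

/-- The full invariant at time `n`. -/
structure NInv (ε : ℕ → ℤ) (n : ℕ) : Prop where
  st : StInv (srw ε n)
  supp : ∀ i : ℤ, i < -(n:ℤ) ∨ (n:ℤ) ≤ i → (srw ε n).loc i = aInit i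
  posL : -(n:ℤ) ≤ (srw ε n).pos
  posU : (srw ε n).pos ≤ (n:ℤ)
  area : 2 * ((srw ε n).coins : ℤ) =
    areaA (modLoc ε n) + (srw ε n).loc ((srw ε n).pos - 1) + (srw ε n).loc (srw ε n).pos
      + (if (srw ε n).loc ((srw ε n).pos - 1) < (srw ε n).loc (srw ε n).pos then 2 else 0)

theorem modLoc_support (ε : ℕ → ℤ) (n : ℕ) (h : NInv ε n) :
    (Function.support fun x => modLoc ε n x - aTilde x) ⊆
      Set.Icc (-(n:ℤ) - 2) ((n:ℤ) + 2) := by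
  intro x hx
  simp only [Set.mem_Icc]
  by_contra hc
  apply hx
  have hout : x < -(n:ℤ) - 2 ∨ (n:ℤ) + 2 < x := by omega
  have hpL := h.posL
  have hpU := h.posU
  show modLoc ε n x - aTilde x = 0
  rw [modLoc_eq_Fmod, Fmod]
  split
  · next hle =>
    have hx1 : x - 1 < -(n:ℤ) := by omega
    rw [h.supp (x - 1) (Or.inl hx1), aInit_pred (by omega)]
    ring
  · next hgt =>
    have hx1 : (n:ℤ) ≤ x := by omega
    rw [h.supp x (Or.inr hx1), aInit_of_nonneg (by omega)]
    ring

theorem modLoc_support_finite (ε : ℕ → ℤ) (n : ℕ) (h : NInv ε n) :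
    (Function.support fun x => modLoc ε n x - aTilde x).Finite :=
  Set.Finite.subset (Set.finite_Icc _ _) (modLoc_support ε n h)

theorem ninv_updR (ε : ℕ → ℤ) (n : ℕ) (h : NInv ε n) (c : ℕ)
    (hsrw1 : srw ε (n + 1) = updR (srw ε n) c)
    (hle : (srw ε n).loc (srw ε n).pos ≤ (srw ε n).loc ((srw ε n).pos - 1))
    (hcoins : 2 * (c : ℤ) = 2 * ((srw ε n).coins : ℤ) +
      (2 - ((srw ε n).loc ((srw ε n).pos - 1) - (srw ε n).loc (srw ε n).pos))) :
    NInv ε (n + 1) := by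
  have hpL := h.posL
  have hpU := h.posU
  have hsupp := h.supp
  have hold := h.area
  have hst := h.st
  set s := srw ε n with hs
  have h02 := hst.h02R hle
  have hhid := abs_le.mp hst.hid
  constructor
  · rw [hsrw1]; exact stinv_updR s c hst hle
  · intro i hi
    push_cast at hi
    rw [hsrw1, updR_loc_of_ne s c (by omega : i ≠ s.pos)]
    exact hsupp i (by omega)
  · rw [hsrw1, updR_pos]; push_cast; omega
  · rw [hsrw1, updR_pos]; push_cast; omega
  · -- area
    have harea : areaA (modLoc ε (n + 1)) =
        areaA (modLoc ε n) + (s.loc s.pos + 1 - s.loc (s.pos + 1)) := by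
      rw [modLoc_eq_Fmod ε (n + 1), hsrw1]
      have := areaA_update (f := modLoc ε n) (g := Fmod (updR s c)) (s.pos + 1)
        (modLoc_support_finite ε n h)
        (fun x hx => Fmod_updR_of_ne s c hx)
      rw [this, Fmod_updR_self]
      rw [show modLoc ε n (s.pos + 1) = Fmod s (s.pos + 1) from rfl, Fmod_pos_succ]
    rw [if_neg (by omega)] at hold
    rw [hsrw1, updR_coins, updR_pos, add_sub_cancel_right, updR_loc_pos,
      updR_loc_of_ne s c (by omega : s.pos + 1 ≠ s.pos), harea,
      if_neg (by omega : ¬ s.loc s.pos + 1 < s.loc (s.pos + 1))]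
    omega

theorem ninv_updL (ε : ℕ → ℤ) (n : ℕ) (h : NInv ε n) (c : ℕ)
    (hsrw1 : srw ε (n + 1) = updL (srw ε n) c)
    (hle : (srw ε n).loc ((srw ε n).pos - 1) ≤ (srw ε n).loc (srw ε n).pos)
    (hcoins : 2 * (c : ℤ) = 2 * ((srw ε n).coins : ℤ) +
      (2 - ((srw ε n).loc (srw ε n).pos - (srw ε n).loc ((srw ε n).pos - 1)))) :
    NInv ε (n + 1) := by
  have hpL := h.posL
  have hpU := h.posU
  have hsupp := h.supp
  have hold := h.area
  have hst := h.st
  set s := srw ε n with hs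
  have h02 := hst.h02L hle
  -- the value one step to the left differs from lm by exactly 1
  have hd : s.loc (s.pos - 2) = s.loc (s.pos - 1) - 1 ∨
      s.loc (s.pos - 2) = s.loc (s.pos - 1) + 1 := by
    have hlipm := hst.lip (s.pos - 1) (by omega)
    rw [Fmod_pos_pred, sub_add_cancel, Fmod_pos, abs_le] at hlipm
    have hpar_p := hst.par s.pos
    rw [Fmod_pos] at hpar_p
    have hpar_pm := hst.par (s.pos - 1)
    rw [Fmod_pos_pred] at hpar_pm
    have hat := aTilde_add_one (s.pos - 1)
    rw [sub_add_cancel] at hat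
    omega
  constructor
  · rw [hsrw1]; exact stinv_updL s c hst hle
  · intro i hi
    push_cast at hi
    rw [hsrw1, updL_loc_of_ne s c (by omega : i ≠ s.pos - 1)]
    exact hsupp i (by omega)
  · rw [hsrw1, updL_pos]; push_cast; omega
  · rw [hsrw1, updL_pos]; push_cast; omega
  · -- area
    have harea : areaA (modLoc ε (n + 1)) =
        areaA (modLoc ε n) + (s.loc s.pos - s.loc (s.pos - 1)) := by
      rw [modLoc_eq_Fmod ε (n + 1), hsrw1]
      have := areaA_update (f := modLoc ε n) (g := Fmod (updL s c)) s.pos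
        (modLoc_support_finite ε n h)
        (fun x hx => Fmod_updL_of_ne s c hx)
      rw [this, Fmod_updL_self]
      rw [show modLoc ε n s.pos = Fmod s s.pos from rfl, Fmod_pos]
    rw [hsrw1, updL_coins, updL_pos, updL_loc_pred,
      updL_loc_of_ne s c (by omega : s.pos - 1 - 1 ≠ s.pos - 1),
      show s.pos - 1 - 1 = s.pos - 2 by ring, harea]
    rcases h02 with h0 | h2
    · rw [if_neg (by omega)] at hold
      rcases hd with hd | hd
      · rw [if_pos (by omega)]; omega
      · rw [if_neg (by omega)]; omega
    · rw [if_pos (by omega)] at hold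
      rcases hd with hd | hd
      · rw [if_pos (by omega)]; omega
      · rw [if_neg (by omega)]; omega

end Aux3
section Aux4

theorem modLoc_zero (ε : ℕ → ℤ) : modLoc ε 0 = aTilde := by
  funext x
  rw [modLoc_eq_Fmod,
    show Fmod (srw ε 0) x = if x ≤ (0:ℤ) then aInit (x - 1) else aInit x from rfl]
  split
  · exact aInit_pred ‹_›
  · exact aInit_of_nonneg (by omega)

theorem areaA_aTilde : areaA aTilde = 0 := by
  unfold areaA
  simp

theorem ninv_zero (ε : ℕ → ℤ) : NInv ε 0 := by
  have hF : ∀ x, Fmod (srw ε 0) x = aTilde x := by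
    intro x
    rw [← modLoc_eq_Fmod, modLoc_zero]
  have hpar2 : (srw ε 0).loc ((srw ε 0).pos - 1) = 0 ∧ (srw ε 0).loc (srw ε 0).pos = 0 ∧
      (srw ε 0).loc ((srw ε 0).pos + 1) = -1 := by
    refine ⟨?_, ?_, ?_⟩
    · show aInit ((0:ℤ) - 1) = 0; decide
    · show aInit (0:ℤ) = 0; decide
    · show aInit ((0:ℤ) + 1) = -1; decide
  obtain ⟨e1, e2, e3⟩ := hpar2
  constructor
  · constructor
    · intro x; rw [hF]; simp
    · rw [e1, e2]; decide
    · intro x _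
      rw [hF, hF]
      have h1 := aTilde_add_one x
      have h2 := aTilde_nonpos x
      have h3 := neg_one_le_aTilde x
      have h4 := aTilde_nonpos (x + 1)
      have h5 := neg_one_le_aTilde (x + 1)
      rw [abs_le]; omega
    · rw [e2, e3]; decide
    · intro x; rw [hF]
    · rw [e2]; decide
    · rw [e1, e2]; intro; exact le_refl 0
    · rw [e1, e2]; decide
  · intro i _; rfl
  · show -(0:ℤ) ≤ 0; norm_num
  · show (0:ℤ) ≤ 0; norm_num
  · rw [modLoc_zero, areaA_aTilde, e1, e2]
    norm_num
    rfl

theorem ninv_all (ε : ℕ → ℤ) (hε : ∀ j, ε j = 1 ∨ ε j = -1) : ∀ n, NInv ε n := by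
  intro n
  induction n with
  | zero => exact ninv_zero ε
  | succ n ih =>
    have hsrw1 : srw ε (n + 1) = srwStep ε (srw ε n) := rfl
    rcases lt_trichotomy ((srw ε n).loc ((srw ε n).pos - 1)) ((srw ε n).loc (srw ε n).pos)
      with hc | hc | hc
    · refine ninv_updL ε n ih _ (by rw [hsrw1, srwStep_L ε _ hc]) (le_of_lt hc) ?_
      have := ih.st.h02L (le_of_lt hc)
      omega
    · rcases hε ((srw ε n).coins) with he | he
      · refine ninv_updR ε n ih _ (by rw [hsrw1, srwStep_ER ε _ hc he]) (le_of_eq hc.symm) ?_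
        push_cast; omega
      · refine ninv_updL ε n ih _ (by rw [hsrw1, srwStep_EL ε _ hc he]) (le_of_eq hc) ?_
        push_cast; omega
    · refine ninv_updR ε n ih _ (by rw [hsrw1, srwStep_R ε _ hc]) (le_of_lt hc) ?_
      have := ih.st.h02R (le_of_lt hc)
      omega

theorem isEqTime_iff (ε : ℕ → ℤ) (n : ℕ) :
    IsEqTime ε n ↔ (srw ε n).loc ((srw ε n).pos - 1) = (srw ε n).loc (srw ε n).pos :=
  Iff.rfl

theorem coins_count (ε : ℕ → ℤ) [DecidablePred (IsEqTime ε)] (n : ℕ) :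
    (srw ε n).coins = Nat.count (IsEqTime ε) n := by
  induction n with
  | zero => rfl
  | succ n ih =>
    have hsrw1 : (srw ε (n + 1)).coins =
        if (srw ε n).loc ((srw ε n).pos - 1) = (srw ε n).loc (srw ε n).pos then
          (srw ε n).coins + 1 else (srw ε n).coins := rfl
    rw [hsrw1, Nat.count_succ, ih]
    by_cases h : IsEqTime ε n
    · rw [if_pos ((isEqTime_iff ε n).mp h), if_pos h]
    · rw [if_neg (fun hh => h ((isEqTime_iff ε n).mpr hh)), if_neg h, add_zero]

theorem step_max (ε : ℕ → ℤ) (hε : ∀ j, ε j = 1 ∨ ε j = -1) (n : ℕ)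
    (hne : ¬ IsEqTime ε n) :
    1 ≤ max ((srw ε n).loc ((srw ε n).pos - 1)) ((srw ε n).loc (srw ε n).pos) ∧
    max ((srw ε (n + 1)).loc ((srw ε (n + 1)).pos - 1)) ((srw ε (n + 1)).loc (srw ε (n + 1)).pos)
      = max ((srw ε n).loc ((srw ε n).pos - 1)) ((srw ε n).loc (srw ε n).pos) - 1 := by
  have h := ninv_all ε hε n
  have hst := h.st
  have hsrw1 : srw ε (n + 1) = srwStep ε (srw ε n) := rfl
  rw [isEqTime_iff] at hne
  have hgep := hst.ge (srw ε n).pos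
  rw [Fmod_pos] at hgep
  have hatp := neg_one_le_aTilde (srw ε n).pos
  have hlpge := hst.lpge
  have hhid := abs_le.mp hst.hid
  set s := srw ε n with hs
  rcases lt_trichotomy (s.loc (s.pos - 1)) (s.loc s.pos) with hc | hc | hc
  · -- move left
    have h02 := hst.h02L (le_of_lt hc)
    have hlipm := hst.lip (s.pos - 1) (by omega)
    rw [Fmod_pos_pred, sub_add_cancel, Fmod_pos, abs_le] at hlipm
    rw [hsrw1, srwStep_L ε _ hc, updL_pos, updL_loc_pred,
      updL_loc_of_ne s _ (by omega : s.pos - 1 - 1 ≠ s.pos - 1),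
      show s.pos - 1 - 1 = s.pos - 2 by ring]
    omega
  · exact absurd hc hne
  · -- move right
    have h02 := hst.h02R (le_of_lt hc)
    rw [hsrw1, srwStep_R ε _ hc, updR_pos, add_sub_cancel_right, updR_loc_pos,
      updR_loc_of_ne s _ (by omega : s.pos + 1 ≠ s.pos)]
    omega

theorem exists_eqTime (ε : ℕ → ℤ) (hε : ∀ j, ε j = 1 ∨ ε j = -1) :
    ∀ c n, (max ((srw ε n).loc ((srw ε n).pos - 1)) ((srw ε n).loc (srw ε n).pos)).toNat ≤ c →
      ∃ m, n ≤ m ∧ IsEqTime ε m := by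
  intro c
  induction c with
  | zero =>
    intro n hn
    by_cases heq : IsEqTime ε n
    · exact ⟨n, le_rfl, heq⟩
    · exact absurd hn (by have := (step_max ε hε n heq).1; omega)
  | succ c ih =>
    intro n hn
    by_cases heq : IsEqTime ε n
    · exact ⟨n, le_rfl, heq⟩
    · obtain ⟨h1, h2⟩ := step_max ε hε n heq
      obtain ⟨m, hm, hmeq⟩ := ih (n + 1) (by omega)
      exact ⟨m, by omega, hmeq⟩

theorem isEqTime_infinite (ε : ℕ → ℤ) (hε : ∀ j, ε j = 1 ∨ ε j = -1) :
    {n | IsEqTime ε n}.Infinite := by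
  apply Set.infinite_of_forall_exists_gt
  intro a
  obtain ⟨m, hm, hmeq⟩ := exists_eqTime ε hε
    (max ((srw ε (a+1)).loc ((srw ε (a+1)).pos - 1)) ((srw ε (a+1)).loc (srw ε (a+1)).pos)).toNat
    (a + 1) le_rfl
  exact ⟨m, hmeq, by omega⟩

end Aux4
section Aux5

theorem areaA_eq_sum (ε : ℕ → ℤ) (n : ℕ) (h : NInv ε n) (B : Finset ℤ)
    (hB : Set.Icc (-(n:ℤ) - 2) ((n:ℤ) + 2) ⊆ (B : Set ℤ)) :
    areaA (modLoc ε n) = ∑ x ∈ B, (modLoc ε n x - aTilde x) :=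
  finsum_eq_finset_sum_of_support_subset _ ((modLoc_support ε n h).trans hB)

theorem sq_le_area (ε : ℕ → ℤ) (n : ℕ) (h : NInv ε n) (heq : IsEqTime ε n) :
    ((srw ε n).loc (srw ε n).pos) ^ 2 ≤ areaA (modLoc ε n) := by
  have hst := h.st
  rw [isEqTime_iff] at heq
  have hH0 : (0:ℤ) ≤ (srw ε n).loc (srw ε n).pos := hst.eqnn heq
  have hhid := abs_le.mp hst.hid
  set p := (srw ε n).pos with hp
  set H := (srw ε n).loc (srw ε n).pos with hH
  set f := modLoc ε n with hf
  have hfF : ∀ x, f x = Fmod (srw ε n) x := fun x => rfl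
  have hfp : f p = H := by rw [hfF, Fmod_pos, heq]
  have hge : ∀ x, aTilde x ≤ f x := fun x => by rw [hfF]; exact hst.ge x
  have hfull : ∀ x, |f (x + 1) - f x| ≤ 1 := by
    intro x
    by_cases hx : x = p
    · subst hx
      rw [hfp, hfF, Fmod_pos_succ, ← hp, abs_le]
      omega
    · rw [hfF, hfF]; exact hst.lip x hx
  have hchainR : ∀ t : ℕ, H - t ≤ f (p + t) := by
    intro t
    induction t with
    | zero => simp [hfp]
    | succ t ih =>
      have h1 := abs_le.mp (hfull (p + t))
      push_cast
      rw [show p + ((t:ℤ) + 1) = (p + t) + 1 by ring]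
      omega
  have hchainL : ∀ t : ℕ, H - t ≤ f (p - t) := by
    intro t
    induction t with
    | zero => simp [hfp]
    | succ t ih =>
      have h1 := abs_le.mp (hfull (p - t - 1))
      rw [sub_add_cancel] at h1
      push_cast
      rw [show p - ((t:ℤ) + 1) = (p - t) - 1 by ring]
      omega
  have hsum : ∀ t : ℕ, (2 * t + 1) * H - t * (t + 1) ≤
      ∑ x ∈ Finset.Icc (p - t) (p + t), (f x - aTilde x) := by
    intro t
    induction t with
    | zero =>
      have h1 := aTilde_nonpos p
      simp only [Nat.cast_zero, sub_zero, add_zero, Finset.Icc_self, Finset.sum_singleton]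
      rw [hfp]  -- goal may need rw
      push_cast
      omega
    | succ t ih =>
      have hins : Finset.Icc (p - ((t:ℕ)+1:ℕ)) (p + ((t:ℕ)+1:ℕ)) =
          insert (p - ((t:ℕ)+1:ℕ)) (insert (p + ((t:ℕ)+1:ℕ)) (Finset.Icc (p - t) (p + t))) := by
        ext y
        simp only [Finset.mem_Icc, Finset.mem_insert]
        push_cast
        omega
      rw [hins, Finset.sum_insert (by simp only [Finset.mem_insert, Finset.mem_Icc]; push_cast; omega),
        Finset.sum_insert (by simp only [Finset.mem_Icc]; push_cast; omega)]
      have h1 := hchainL (t + 1)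
      have h2 := hchainR (t + 1)
      have h3 := aTilde_nonpos (p - ((t:ℕ)+1:ℕ))
      have h4 := aTilde_nonpos (p + ((t:ℕ)+1:ℕ))
      push_cast at h1 h2 h3 h4 ⊢
      nlinarith [ih]
  rcases eq_or_lt_of_le hH0 with h0 | h0
  · rw [areaA_eq_sum ε n h (Finset.Icc (-(n:ℤ) - 2) ((n:ℤ) + 2)) (by rw [Finset.coe_Icc])]
    have : (0:ℤ) ≤ ∑ x ∈ Finset.Icc (-(n:ℤ) - 2) ((n:ℤ) + 2), (f x - aTilde x) :=
      Finset.sum_nonneg fun i _ => by have := hge i; omega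
    rw [← h0]
    simpa using this
  · set t : ℕ := (H - 1).toNat with htdef
    have ht : (t : ℤ) = H - 1 := Int.toNat_of_nonneg (by omega)
    set B := Finset.Icc (min (-(n:ℤ) - 2) (p - t)) (max ((n:ℤ) + 2) (p + t)) with hB
    have hArea : areaA f = ∑ x ∈ B, (f x - aTilde x) := by
      apply areaA_eq_sum ε n h
      rw [Finset.coe_Icc]
      exact Set.Icc_subset_Icc (min_le_left _ _) (le_max_left _ _)
    have hsub : Finset.Icc (p - (t:ℤ)) (p + t) ⊆ B :=
      Finset.Icc_subset_Icc (min_le_right _ _) (le_max_right _ _)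
    have hmono : ∑ x ∈ Finset.Icc (p - (t:ℤ)) (p + t), (f x - aTilde x) ≤
        ∑ x ∈ B, (f x - aTilde x) :=
      Finset.sum_le_sum_of_subset_of_nonneg hsub fun i _ _ => by have := hge i; omega
    have hval : (2 * (t:ℤ) + 1) * H - t * (t + 1) = H ^ 2 := by rw [ht]; ring
    have := hsum t
    rw [hArea]
    linarith
end Aux5
/-- for every `k`, writing `𝒜 = 𝒜(ℓ~_{N(k)})`, one has
`𝒜/2 ≤ k ≤ 𝒜/2 + √𝒜`. -/
theorem statement2 (ε : ℕ → ℤ) (hε : ∀ j, ε j = 1 ∨ ε j = -1) (k : ℕ) :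
    (areaA (modLoc ε (timeN ε k)) : ℝ) / 2 ≤ (k : ℝ) ∧
      (k : ℝ) ≤ (areaA (modLoc ε (timeN ε k)) : ℝ) / 2 +
        Real.sqrt (areaA (modLoc ε (timeN ε k))) := by
  classical
  have hinf := isEqTime_infinite ε hε
  have heq : IsEqTime ε (timeN ε k) := Nat.nth_mem_of_infinite hinf k
  have hcount : Nat.count (IsEqTime ε) (timeN ε k) = k := Nat.count_nth_of_infinite hinf k
  set N := timeN ε k with hN
  have h := ninv_all ε hε N
  have hsq := sq_le_area ε N h heq
  have hcoins : (srw ε N).coins = k := by rw [coins_count ε N]; exact hcount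
  have harea := h.area
  rw [isEqTime_iff] at heq
  rw [heq, if_neg (lt_irrefl _), hcoins] at harea
  have hH0 : (0:ℤ) ≤ (srw ε N).loc (srw ε N).pos := h.st.eqnn heq
  set A := areaA (modLoc ε N) with hA
  set H := (srw ε N).loc (srw ε N).pos with hH
  have hA0 : (0:ℤ) ≤ A := le_trans (sq_nonneg H) hsq
  constructor
  · have h1 : (A:ℤ) ≤ 2 * k := by omega
    have h2 : (A:ℝ) ≤ 2 * (k:ℝ) := by exact_mod_cast h1
    linarith
  · have hHsqrt : (H:ℝ) ≤ Real.sqrt (A:ℝ) := by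
      rw [Real.le_sqrt (by exact_mod_cast hH0) (by exact_mod_cast hA0)]
      exact_mod_cast hsq
    have hk : 2 * (k:ℤ) = A + 2 * H := by omega
    have hk' : 2 * (k:ℝ) = (A:ℝ) + 2 * (H:ℝ) := by exact_mod_cast hk
    linarith
end

section
/- For every n ∈ ℕ with ℓ_n^- = ℓ_n^+, the modified local time f = ℓ~_n satisfies: |f(x+1) - f(x)| = 1 for all x ∈ ℤ; there exist x ≤ 0 and x' ≥ 0 with f(x) = f(x') = -1; f(x) = ã(x) for all x ≤ m₋(f) and all x ≥ m₊(f); and f(x) ≥ 0 for all x with m₋(f) < x < m₊(f). -/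
open MeasureTheory Filter

/- ==================== auxiliary machinery ==================== -/

lemma aInit_eq (i : ℤ) :
    aInit i = if ((0 ≤ i ∧ i % 2 = 0) ∨ (i < 0 ∧ i % 2 = 1)) then 0 else -1 := by
  unfold aInit
  simp only [Int.even_iff]
  split_ifs <;> omega

lemma aTilde_eq (x : ℤ) : aTilde x = if x % 2 = 0 then 0 else -1 := by
  unfold aTilde
  simp only [Int.even_iff]

/-- The structural invariant of the walk state. -/
def SRWInv (X : ℤ) (g : ℤ → ℤ) : Prop :=
  (∀ i : ℤ, i ≠ X - 1 → g (i+1) - g i = 1 ∨ g (i+1) - g i = -1) ∧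
  (g X - g (X-1) = -2 ∨ g X - g (X-1) = 0 ∨ g X - g (X-1) = 2) ∧
  ∃ a b : ℤ, a ≤ -2 ∧ a % 2 = 0 ∧ (∀ i, i ≤ a → g i = aInit i) ∧
    (∀ i, a < i → i ≤ X - 1 → 0 ≤ g i) ∧ a ≤ X - 1 ∧
    1 ≤ b ∧ b % 2 = 1 ∧ (∀ i, b ≤ i → g i = aInit i) ∧
    (∀ i, X ≤ i → i < b → 0 ≤ g i) ∧ X ≤ b

lemma srwInvZero : SRWInv 0 aInit := by
  refine ⟨?_, ?_, -2, 1, by norm_num, by norm_num, fun i _ => rfl, ?_, by norm_num,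
    le_refl 1, by norm_num, fun i _ => rfl, ?_, by norm_num⟩
  · intro i _
    rw [aInit_eq, aInit_eq]
    split_ifs <;> omega
  · rw [aInit_eq, aInit_eq]
    norm_num
  · intro i h1 h2
    have : i = -1 := by omega
    subst this
    rw [aInit_eq]
    norm_num
  · intro i h1 h2
    have : i = 0 := by omega
    subst this
    rw [aInit_eq]
    norm_num

lemma stepRight {X : ℤ} {g : ℤ → ℤ} (h : SRWInv X g)
    (hgap : g X - g (X-1) = -2 ∨ g X - g (X-1) = 0) :
    SRWInv (X+1) (fun i => if i = X then g i + 1 else g i) := by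
  obtain ⟨h1, _h2, a, b, ha1, ha2, ha3, ha4, ha5, hb1, hb2, hb3, hb4, hb5⟩ := h
  refine ⟨?_, ?_, ?_⟩
  · intro i hi
    have hiX : i ≠ X := by omega
    by_cases hx : i = X - 1
    · subst hx
      simp only [show X - 1 + 1 = X from by ring]
      split_ifs <;> omega
    · have := h1 i hx
      simp only
      split_ifs <;> omega
  · have hs := h1 X (by omega)
    simp only [show X + 1 - 1 = X from by ring]
    split_ifs <;> omega
  · rcases lt_or_eq_of_le hb5 with hXb | hXb
    · have hX0 := hb4 X le_rfl hXb
      refine ⟨a, b, ha1, ha2, ?_, ?_, by omega, hb1, hb2, ?_, ?_, by omega⟩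
      · intro i hle
        have := ha3 i hle
        simp only
        split_ifs <;> omega
      · intro i hlt hle
        by_cases hx : i = X
        · subst hx
          simp only
          split_ifs <;> omega
        · have := ha4 i hlt (by omega)
          simp only
          split_ifs <;> omega
      · intro i hbi
        have := hb3 i hbi
        simp only
        split_ifs <;> omega
      · intro i hi1 hi2
        have := hb4 i (by omega) hi2
        simp only
        split_ifs <;> omega
    · subst hXb
      have gbv : g X = -1 := by
        rw [hb3 X le_rfl, aInit_eq, if_neg (by omega)]
      have gb1 : g (X+1) = 0 := by
        rw [hb3 (X+1) (by omega), aInit_eq, if_pos (by omega)]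
      refine ⟨a, X + 2, ha1, ha2, ?_, ?_, by omega, by omega, by omega, ?_, ?_, by omega⟩
      · intro i hle
        have := ha3 i hle
        simp only
        split_ifs <;> omega
      · intro i hlt hle
        by_cases hx : i = X
        · subst hx
          simp only
          split_ifs <;> omega
        · have := ha4 i hlt (by omega)
          simp only
          split_ifs <;> omega
      · intro i hbi
        have := hb3 i (by omega)
        simp only
        split_ifs <;> omega
      · intro i hi1 hi2
        have : i = X + 1 := by omega
        subst this
        simp only
        split_ifs <;> omega

lemma stepLeft {X : ℤ} {g : ℤ → ℤ} (h : SRWInv X g)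
    (hgap : g X - g (X-1) = 2 ∨ g X - g (X-1) = 0) :
    SRWInv (X-1) (fun i => if i = X - 1 then g i + 1 else g i) := by
  obtain ⟨h1, _h2, a, b, ha1, ha2, ha3, ha4, ha5, hb1, hb2, hb3, hb4, hb5⟩ := h
  refine ⟨?_, ?_, ?_⟩
  · intro i hi
    have hiX : i ≠ X - 2 := by omega
    by_cases hx : i = X - 1
    · subst hx
      simp only [show X - 1 + 1 = X from by ring]
      split_ifs <;> omega
    · have := h1 i hx
      simp only
      split_ifs <;> omega
  · have hs := h1 (X-2) (by omega)
    rw [show X - 2 + 1 = X - 1 from by ring] at hs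
    simp only [show X - 1 - 1 = X - 2 from by ring]
    split_ifs <;> omega
  · rcases lt_or_eq_of_le ha5 with hXa | hXa
    · refine ⟨a, b, ha1, ha2, ?_, ?_, by omega, hb1, hb2, ?_, ?_, by omega⟩
      · intro i hle
        have := ha3 i hle
        simp only
        split_ifs <;> omega
      · intro i hlt hle
        have := ha4 i hlt (by omega)
        simp only
        split_ifs <;> omega
      · intro i hbi
        have := hb3 i hbi
        simp only
        split_ifs <;> omega
      · intro i hi1 hi2
        by_cases hx : i = X - 1
        · subst hx
          have := ha4 (X-1) (by omega) le_rfl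
          simp only
          split_ifs <;> omega
        · have := hb4 i (by omega) hi2
          simp only
          split_ifs <;> omega
    · subst hXa
      have gav : g (X-1) = -1 := by
        rw [ha3 (X-1) le_rfl, aInit_eq, if_neg (by omega)]
      have ga2 : g (X-2) = 0 := by
        rw [ha3 (X-2) (by omega), aInit_eq, if_pos (by omega)]
      refine ⟨X - 3, b, by omega, by omega, ?_, ?_, by omega, hb1, hb2, ?_, ?_, by omega⟩
      · intro i hle
        have := ha3 i (by omega)
        simp only
        split_ifs <;> omega
      · intro i hi1 hi2
        have : i = X - 2 := by omega
        subst this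
        simp only
        split_ifs <;> omega
      · intro i hbi
        have := hb3 i hbi
        simp only
        split_ifs <;> omega
      · intro i hi1 hi2
        by_cases hx : i = X - 1
        · subst hx
          simp only
          split_ifs <;> omega
        · have := hb4 i (by omega) hi2
          simp only
          split_ifs <;> omega

lemma srwInvAll (ε : ℕ → ℤ) (hε : ∀ j, ε j = 1 ∨ ε j = -1) (n : ℕ) :
    SRWInv (srw ε n).pos (srw ε n).loc := by
  induction n with
  | zero => exact srwInvZero
  | succ n ih =>
    set s := srw ε n with hs
    have hgap := ih.2.1
    have hstep : srw ε (n+1) = srwStep ε s := rfl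
    rcases hgap with hm2 | h0 | h2
    · have hlt : s.loc s.pos < s.loc (s.pos - 1) := by omega
      have hpos : (srwStep ε s).pos = s.pos + 1 := by
        simp [srwStep, hlt]
      have hloc : (srwStep ε s).loc =
          fun i => if i = s.pos then s.loc i + 1 else s.loc i := by
        funext i
        simp only [srwStep]
        rw [if_pos hlt, min_eq_left (by omega)]
      rw [hstep, hpos, hloc]
      exact stepRight ih (Or.inl hm2)
    · have hnlt : ¬ s.loc s.pos < s.loc (s.pos - 1) := by omega
      have hnlt' : ¬ s.loc (s.pos - 1) < s.loc s.pos := by omega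
      rcases hε s.coins with he | he
      · have hpos : (srwStep ε s).pos = s.pos + 1 := by
          simp [srwStep, hnlt, hnlt', he]
        have hloc : (srwStep ε s).loc =
            fun i => if i = s.pos then s.loc i + 1 else s.loc i := by
          funext i
          simp only [srwStep]
          rw [if_neg hnlt, if_neg hnlt', he, min_eq_left (by omega)]
        rw [hstep, hpos, hloc]
        exact stepRight ih (Or.inr h0)
      · have hpos : (srwStep ε s).pos = s.pos - 1 := by
          simp [srwStep, hnlt, hnlt', he]
          ring
        have hloc : (srwStep ε s).loc =
            fun i => if i = s.pos - 1 then s.loc i + 1 else s.loc i := by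
          funext i
          simp only [srwStep]
          rw [if_neg hnlt, if_neg hnlt', he,
            min_eq_right (by omega), show s.pos + -1 = s.pos - 1 from by ring]
        rw [hstep, hpos, hloc]
        exact stepLeft ih (Or.inr h0)
    · have hlt : s.loc (s.pos - 1) < s.loc s.pos := by omega
      have hnlt : ¬ s.loc s.pos < s.loc (s.pos - 1) := by omega
      have hpos : (srwStep ε s).pos = s.pos - 1 := by
        simp [srwStep, hnlt, hlt]
      have hloc : (srwStep ε s).loc =
          fun i => if i = s.pos - 1 then s.loc i + 1 else s.loc i := by
        funext i
        simp only [srwStep]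
        rw [if_neg hnlt, if_pos hlt, min_eq_right (by omega)]
      rw [hstep, hpos, hloc]
      exact stepLeft ih (Or.inl h2)

/-- at an equality time `n`, the modified local time `f = ℓ~_n`
has slopes `±1`, hits `-1` on both sides of the origin, agrees with `ã`
outside `(m₋(f), m₊(f))`, and is nonnegative inside. -/
theorem statement7 (ε : ℕ → ℤ) (hε : ∀ j, ε j = 1 ∨ ε j = -1) (n : ℕ)
    (heq : IsEqTime ε n) :
    (∀ x : ℤ, |modLoc ε n (x + 1) - modLoc ε n x| = 1) ∧
      (∃ x : ℤ, x ≤ 0 ∧ modLoc ε n x = -1) ∧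
      (∃ x : ℤ, 0 ≤ x ∧ modLoc ε n x = -1) ∧
      (∀ x : ℤ, x ≤ mMinus (modLoc ε n) → modLoc ε n x = aTilde x) ∧
      (∀ x : ℤ, mPlus (modLoc ε n) ≤ x → modLoc ε n x = aTilde x) ∧
      (∀ x : ℤ, mMinus (modLoc ε n) < x → x < mPlus (modLoc ε n) →
        0 ≤ modLoc ε n x) := by
  obtain ⟨h1, _, a, b, ha1, ha2, ha3, ha4, ha5, hb1, hb2, hb3, hb4, hb5⟩ :=
    srwInvAll ε hε n
  set X := (srw ε n).pos with hXdef
  set g := (srw ε n).loc with hgdef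
  have hgap : g (X - 1) = g X := heq
  have fx : ∀ x : ℤ, modLoc ε n x = if x ≤ X then g (x-1) else g x := fun _ => rfl
  have gav : g a = -1 := by rw [ha3 a le_rfl, aInit_eq, if_neg (by omega)]
  have gbv : g b = -1 := by rw [hb3 b le_rfl, aInit_eq, if_neg (by omega)]
  have hXa : a + 2 ≤ X := by
    rcases lt_or_eq_of_le ha5 with h | h
    · omega
    · exfalso
      have h0 : 0 ≤ g X := hb4 X le_rfl (by omega)
      have hc : g (X-1) = -1 := by rw [← h]; exact gav
      omega
  have hXb : X ≤ b - 1 := by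
    rcases lt_or_eq_of_le hb5 with h | h
    · omega
    · exfalso
      have h0 : 0 ≤ g (X-1) := ha4 (X-1) (by omega) le_rfl
      have hc : g X = -1 := by rw [h]; exact gbv
      omega
  have fa : modLoc ε n (a+1) = -1 := by
    rw [fx, if_pos (by omega), show a+1-1 = a from by ring]; exact gav
  have fb : modLoc ε n b = -1 := by
    rw [fx, if_neg (by omega)]; exact gbv
  have fnonneg : ∀ x : ℤ, a + 1 < x → x < b → 0 ≤ modLoc ε n x := by
    intro x h1x h2x
    rw [fx]
    split_ifs with hxX
    · exact ha4 (x-1) (by omega) (by omega)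
    · exact hb4 x (by omega) h2x
  have hub : ∀ x : ℤ, x ≤ 0 → modLoc ε n x = -1 → x ≤ a + 1 := by
    intro x hx0 hfx
    by_contra hc
    push_neg at hc
    have := fnonneg x (by omega) (by omega)
    omega
  have hlb : ∀ x : ℤ, 0 ≤ x → modLoc ε n x = -1 → b ≤ x := by
    intro x hx0 hfx
    by_contra hc
    push_neg at hc
    have := fnonneg x (by omega) (by omega)
    omega
  have hsup : sSup {x : ℤ | x ≤ 0 ∧ modLoc ε n x = -1} = a + 1 :=
    le_antisymm (csSup_le ⟨a+1, by omega, fa⟩ (fun x hx => hub x hx.1 hx.2))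
      (le_csSup ⟨a+1, fun x hx => hub x hx.1 hx.2⟩ ⟨by omega, fa⟩)
  have hinf : sInf {x : ℤ | 0 ≤ x ∧ modLoc ε n x = -1} = b :=
    le_antisymm (csInf_le ⟨b, fun x hx => hlb x hx.1 hx.2⟩ ⟨by omega, fb⟩)
      (le_csInf ⟨b, by omega, fb⟩ (fun x hx => hlb x hx.1 hx.2))
  have hmm : mMinus (modLoc ε n) = a + 2 := by
    unfold mMinus; rw [hsup]; ring
  have hmp : mPlus (modLoc ε n) = b - 1 := by
    unfold mPlus; rw [hinf]; ring
  have slope : ∀ x : ℤ, |modLoc ε n (x+1) - modLoc ε n x| = 1 := by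
    intro x
    rw [fx, fx]
    rcases lt_trichotomy x X with hlt | heqx | hgt
    · rw [if_pos (by omega : x ≤ X), if_pos (by omega : x + 1 ≤ X),
        show x+1-1 = x from by ring]
      have hs := h1 (x-1) (by omega)
      rw [show x-1+1 = x from by ring] at hs
      rcases hs with h | h <;> rw [h] <;> norm_num
    · subst heqx
      rw [if_pos le_rfl, if_neg (by omega)]
      have hs := h1 X (by omega)
      have h2 : g (X+1) - g (X-1) = 1 ∨ g (X+1) - g (X-1) = -1 := by omega
      rcases h2 with h | h <;> rw [h] <;> norm_num
    · rw [if_neg (by omega), if_neg (by omega)]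
      have hs := h1 x (by omega)
      rcases hs with h | h <;> rw [h] <;> norm_num
  have part4 : ∀ x : ℤ, x ≤ a + 2 → modLoc ε n x = aTilde x := by
    intro x hx
    rw [fx, if_pos (by omega)]
    rcases lt_or_eq_of_le hx with h | h
    · rw [ha3 (x-1) (by omega), aInit_eq, aTilde_eq]
      split_ifs <;> omega
    · subst h
      rw [show a+2-1 = a+1 from by ring]
      have hs := h1 a (by omega)
      have h0 := ha4 (a+1) (by omega) (by omega)
      rw [aTilde_eq, if_pos (by omega)]
      omega
  have gbm : 0 ≤ g (b-1) := by
    rcases lt_or_eq_of_le hXb with h | h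
    · exact hb4 (b-1) (by omega) (by omega)
    · rw [← h]
      exact hb4 X le_rfl (by omega)
  have hsb := h1 (b-1) (by omega)
  rw [show b-1+1 = b from by ring] at hsb
  have gb0 : g (b-1) = 0 := by omega
  have part5 : ∀ x : ℤ, b - 1 ≤ x → modLoc ε n x = aTilde x := by
    intro x hx
    rw [fx]
    rcases lt_or_eq_of_le hx with hgt | heqx
    · rw [if_neg (by omega), hb3 x (by omega), aInit_eq, aTilde_eq]
      split_ifs <;> omega
    · subst heqx
      split_ifs with hxX
      · have hXe : X = b - 1 := by omega
        rw [show (b:ℤ)-1-1 = X-1 from by omega, hgap, hXe, gb0, aTilde_eq,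
          if_pos (by omega)]
      · rw [gb0, aTilde_eq, if_pos (by omega)]
  refine ⟨slope, ⟨a+1, by omega, fa⟩, ⟨b, by omega, fb⟩, ?_, ?_, ?_⟩
  · intro x hx
    rw [hmm] at hx
    exact part4 x hx
  · intro x hx
    rw [hmp] at hx
    exact part5 x hx
  · intro x hx1 hx2
    rw [hmm] at hx1
    rw [hmp] at hx2
    exact fnonneg x (by omega) (by omega)
end
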